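/- For all indices i, j, k the v-covariant derivative a^{ij}|^k := ∂a^{ij}/∂p_k + ∑_r a^{rj}·C_r^{ik} + ∑_r a^{ir}·C_r^{jk} satisfies a^{ij}|^k = ((m−2)/K)·(a^{ik}a^j + a^{jk}a^i − 2a^i a^j a^k) = ((m−2)/((m−1)K))·(h^{ik}a^j + h^{jk}a^i). -/

import Mathlib

open Finset
noncomputable section

def Tsum {n L : ℕ} (c : (Fin L → Fin n) → ℝ) (p : Fin n → ℝ) : ℝ :=
  ∑ ι : Fin L → Fin n, c ι * ∏ t, p (ι t)

def TSym {n L : ℕ} (c : (Fin L → Fin n) → ℝ) : Prop :=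
  ∀ (σ : Equiv.Perm (Fin L)) (ι : Fin L → Fin n), c (ι ∘ σ) = c ι

lemma Tsum_succ {n L : ℕ} (c : (Fin (L+1) → Fin n) → ℝ) (p : Fin n → ℝ) :
    Tsum c p = ∑ j, p j * Tsum (fun ι => c (Fin.cons j ι)) p := by
  unfold Tsum
  rw [Fintype.sum_equiv (Fin.consEquiv (fun _ => Fin n)).symm
    (fun ι => c ι * ∏ t, p (ι t))
    (fun x : Fin n × (Fin L → Fin n) => c (Fin.cons x.1 x.2) * (p x.1 * ∏ t, p (x.2 t)))]
  · rw [Fintype.sum_prod_type]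
    refine Finset.sum_congr rfl fun x _ => ?_
    rw [Finset.mul_sum]
    exact Finset.sum_congr rfl fun y _ => by ring
  · intro ι
    have h1 : Fin.cons (ι 0) (fun t => ι t.succ) = ι := by
      funext t; exact Fin.cases rfl (fun s => rfl) t
    simp [Fin.consEquiv, Fin.prod_univ_succ, h1, Fin.tail]

lemma TSym.cons {n L : ℕ} {c : (Fin (L+1) → Fin n) → ℝ} (hc : TSym c) (i : Fin n) :
    TSym (fun ι => c (Fin.cons i ι)) := by
  intro σ ι
  have h : Fin.cons i (ι ∘ σ) = (Fin.cons i ι) ∘ (Equiv.Perm.decomposeFin.symm (0, σ)) := by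
    funext t
    refine Fin.cases ?_ (fun s => ?_) t
    · simp
    · simp [Equiv.Perm.decomposeFin_symm_apply_succ]
  simpa using (h ▸ hc (Equiv.Perm.decomposeFin.symm (0, σ)) (Fin.cons i ι))

lemma TSym.swap01 {n L : ℕ} {c : (Fin (L+2) → Fin n) → ℝ} (hc : TSym c) (i j : Fin n)
    (ι : Fin L → Fin n) : c (Fin.cons i (Fin.cons j ι)) = c (Fin.cons j (Fin.cons i ι)) := by
  have h := hc (Equiv.swap 0 1) (Fin.cons j (Fin.cons i ι))
  rw [← h]
  congr 1
  funext t
  refine Fin.cases ?_ (fun s => ?_) t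
  · simp [Equiv.swap_apply_left]
  · refine Fin.cases ?_ (fun u => ?_) s
    · have : Equiv.swap (0 : Fin (L+2)) 1 ((0:Fin (L+1)).succ) = 0 := by
        simp [Fin.succ_zero_eq_one]
      simp [this, Fin.succ_zero_eq_one]
    · have h0 : (u.succ.succ : Fin (L+2)) ≠ 0 := Fin.succ_ne_zero _
      have h1 : (u.succ.succ : Fin (L+2)) ≠ 1 := by
        rw [← Fin.succ_zero_eq_one]
        exact fun h => Fin.succ_ne_zero _ (Fin.succ_injective _ h)
      simp [Equiv.swap_apply_of_ne_of_ne h0 h1]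

lemma prod_erase_eq_ite {L : ℕ} (g : Fin L → ℝ) (s : Fin L) :
    ∏ u ∈ univ.erase s, g u = ∏ u : Fin L, (if u = s then 1 else g u) := by
  rw [← Finset.mul_prod_erase univ (fun u => if u = s then 1 else g u) (mem_univ s)]
  rw [if_pos rfl, one_mul]
  exact (Finset.prod_congr rfl fun u hu => by
    simp [Finset.ne_of_mem_erase hu]).symm

lemma hasDerivAt_Tsum_raw {n L : ℕ} (c : (Fin L → Fin n) → ℝ) (p : Fin n → ℝ) (k : Fin n) :
    HasDerivAt (fun t => Tsum c (Function.update p k t))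
      (∑ ι : Fin L → Fin n, c ι * ∑ s, ((if ι s = k then 1 else 0) *
        ∏ u, (if u = s then 1 else p (ι u)))) (p k) := by
  have h : ∀ ι : Fin L → Fin n,
      HasDerivAt (fun t => ∏ u, Function.update p k t (ι u))
        (∑ s, ((if ι s = k then 1 else 0) * ∏ u, (if u = s then 1 else p (ι u)))) (p k) := by
    intro ι
    have hf : ∀ s ∈ (univ : Finset (Fin L)), HasDerivAt (fun t => Function.update p k t (ι s))
        (if ι s = k then 1 else 0) (p k) := by
      intro s _
      simp only [Function.update_apply]
      split
      · exact hasDerivAt_id _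
      · exact hasDerivAt_const _ _
    have H := HasDerivAt.fun_finsetProd hf
    refine H.congr_deriv ?_
    refine Finset.sum_congr rfl fun s _ => ?_
    have : ∀ j, Function.update p k (p k) (ι j) = p (ι j) := by
      simp [Function.update_eq_self]
    simp only [this, smul_eq_mul]
    rw [prod_erase_eq_ite (fun u => p (ι u)) s]
    ring
  have H := HasDerivAt.fun_sum (u := (univ : Finset (Fin L → Fin n)))
    (fun ι _ => (h ι).const_mul (c ι))
  exact H

lemma sum_term_symm {n L : ℕ} {c : (Fin (L+1) → Fin n) → ℝ} (hc : TSym c) (p : Fin n → ℝ)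
    (k : Fin n) (s : Fin (L+1)) :
    (∑ ι : Fin (L+1) → Fin n, c ι * ((if ι s = k then 1 else 0) *
        ∏ u, (if u = s then 1 else p (ι u))))
    = ∑ ι : Fin (L+1) → Fin n, c ι * ((if ι 0 = k then 1 else 0) *
        ∏ u, (if u = 0 then 1 else p (ι u))) := by
  refine (Fintype.sum_equiv ((Equiv.swap (0:Fin (L+1)) s).arrowCongr (Equiv.refl (Fin n)))
    _ _ fun ι => ?_).symm
  have harr : ((Equiv.swap (0:Fin (L+1)) s).arrowCongr (Equiv.refl (Fin n))) ι
      = ι ∘ (Equiv.swap (0:Fin (L+1)) s) := by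
    funext u
    simp [Equiv.arrowCongr, Equiv.symm_swap]
  rw [harr, hc]
  congr 1
  congr 1
  · have : (ι ∘ (Equiv.swap (0:Fin (L+1)) s)) s = ι 0 := by
      simp [Equiv.swap_apply_right]
    rw [this]
  · rw [← Equiv.prod_comp (Equiv.swap (0:Fin (L+1)) s)
      (fun u => if u = 0 then 1 else p (ι u))]
    refine Finset.prod_congr rfl fun u _ => ?_
    have hcond : (Equiv.swap (0:Fin (L+1)) s u = 0) = (u = s) := by
      rw [Equiv.swap_apply_eq_iff, Equiv.swap_apply_left]
    simp only [Function.comp_apply, hcond]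

lemma sum_term_zero {n L : ℕ} (c : (Fin (L+1) → Fin n) → ℝ) (p : Fin n → ℝ) (k : Fin n) :
    (∑ ι : Fin (L+1) → Fin n, c ι * ((if ι 0 = k then 1 else 0) *
        ∏ u, (if u = 0 then 1 else p (ι u))))
    = Tsum (fun ι => c (Fin.cons k ι)) p := by
  rw [Fintype.sum_equiv (Fin.consEquiv (fun _ => Fin n)).symm _
      (fun x : Fin n × (Fin L → Fin n) =>
        c (Fin.cons x.1 x.2) * ((if x.1 = k then 1 else 0) * ∏ t, p (x.2 t)))]
  · rw [Fintype.sum_prod_type]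
    rw [Finset.sum_eq_single k]
    · simp [Tsum]
    · intro b _ hb
      simp [hb]
    · simp
  · intro ι
    have h1 : Fin.cons (ι 0) (fun t => ι t.succ) = ι := by
      funext t; exact Fin.cases rfl (fun s => rfl) t
    have h2 : ∏ u : Fin (L+1), (if u = 0 then 1 else p (ι u))
        = ∏ t : Fin L, p (ι t.succ) := by
      rw [Fin.prod_univ_succ]
      simp [Fin.succ_ne_zero]
    simp [Fin.consEquiv, h1, h2, Fin.tail]
    by_cases hk : ι 0 = k <;> simp [hk]

lemma hasDerivAt_Tsum {n L : ℕ} {c : (Fin (L+1) → Fin n) → ℝ} (hc : TSym c) (p : Fin n → ℝ)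
    (k : Fin n) :
    HasDerivAt (fun t => Tsum c (Function.update p k t))
      (((L:ℝ)+1) * Tsum (fun ι => c (Fin.cons k ι)) p) (p k) := by
  have H := hasDerivAt_Tsum_raw c p k
  have heq : (∑ ι : Fin (L+1) → Fin n, c ι * ∑ s, ((if ι s = k then 1 else 0) *
        ∏ u, (if u = s then 1 else p (ι u))))
      = ((L:ℝ)+1) * Tsum (fun ι => c (Fin.cons k ι)) p := by
    have : ∀ ι : Fin (L+1) → Fin n, c ι * ∑ s, ((if ι s = k then 1 else 0) *
        ∏ u, (if u = s then 1 else p (ι u)))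
        = ∑ s : Fin (L+1), c ι * ((if ι s = k then 1 else 0) *
          ∏ u, (if u = s then 1 else p (ι u))) := fun ι => Finset.mul_sum _ _ _
    simp only [this]
    rw [Finset.sum_comm]
    calc (∑ s : Fin (L+1), ∑ ι : Fin (L+1) → Fin n, c ι * ((if ι s = k then 1 else 0) *
          ∏ u, (if u = s then 1 else p (ι u))))
        = ∑ s : Fin (L+1), Tsum (fun ι => c (Fin.cons k ι)) p := by
          refine Finset.sum_congr rfl fun s _ => ?_
          rw [sum_term_symm hc p k s, sum_term_zero]
      _ = ((L:ℝ)+1) * Tsum (fun ι => c (Fin.cons k ι)) p := by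
          rw [Finset.sum_const, Finset.card_univ, Fintype.card_fin]
          push_cast [nsmul_eq_mul]
          ring
  rwa [heq] at H

/-- `A(p) = ∑ a^{i₁…i_m} p_{i₁}⋯p_{i_m}`, where `m = M + 3 ≥ 3`. -/
def Afun {n M : ℕ} (a : (Fin (M + 3) → Fin n) → ℝ) (p : Fin n → ℝ) : ℝ :=
  ∑ ι : Fin (M + 3) → Fin n, a ι * ∏ t, p (ι t)

/-- `K(p) = A(p)^{1/m}`. -/
def Kfun {n M : ℕ} (a : (Fin (M + 3) → Fin n) → ℝ) (p : Fin n → ℝ) : ℝ :=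
  Afun a p ^ ((1 : ℝ) / (M + 3))

/-- `a^i = (∑ a^{i i₂…i_m} p_{i₂}⋯p_{i_m}) / K^{m-1}`. -/
def aU1 {n M : ℕ} (a : (Fin (M + 3) → Fin n) → ℝ) (i : Fin n) (p : Fin n → ℝ) : ℝ :=
  (∑ ι : Fin (M + 2) → Fin n, a (Fin.cons i ι) * ∏ t, p (ι t)) / Kfun a p ^ (M + 2)

/-- `a^{ij} = (∑ a^{i j i₃…i_m} p_{i₃}⋯p_{i_m}) / K^{m-2}`. -/
def aU2 {n M : ℕ} (a : (Fin (M + 3) → Fin n) → ℝ) (i j : Fin n) (p : Fin n → ℝ) : ℝ :=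
  (∑ ι : Fin (M + 1) → Fin n, a (Fin.cons i (Fin.cons j ι)) * ∏ t, p (ι t)) / Kfun a p ^ (M + 1)

/-- `a^{ijk} = (∑ a^{i j k i₄…i_m} p_{i₄}⋯p_{i_m}) / K^{m-3}`. -/
def aU3 {n M : ℕ} (a : (Fin (M + 3) → Fin n) → ℝ) (i j k : Fin n) (p : Fin n → ℝ) : ℝ :=
  (∑ ι : Fin M → Fin n, a (Fin.cons i (Fin.cons j (Fin.cons k ι))) * ∏ t, p (ι t)) / Kfun a p ^ M

/-- Partial derivative `∂f/∂p_k` of a function of `p`. -/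
def pd {n : ℕ} (f : (Fin n → ℝ) → ℝ) (k : Fin n) (p : Fin n → ℝ) : ℝ :=
  deriv (fun t => f (Function.update p k t)) (p k)

/-- Fundamental metrical d-tensor `g^{ij} = (1/2) ∂²(K²)/∂p_i∂p_j`. -/
def gU {n M : ℕ} (a : (Fin (M + 3) → Fin n) → ℝ) (i j : Fin n) (p : Fin n → ℝ) : ℝ :=
  (1 / 2 : ℝ) * pd (fun q => pd (fun r => Kfun a r ^ 2) j q) i p

/-- Angular metrical d-tensor `h^{ij} = K ∂²K/∂p_i∂p_j`. -/
def hU {n M : ℕ} (a : (Fin (M + 3) → Fin n) → ℝ) (i j : Fin n) (p : Fin n → ℝ) : ℝ :=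
  Kfun a p * pd (fun q => pd (Kfun a) j q) i p

/-- v-torsion d-tensor `C^{ijk} = -(1/2) ∂g^{ij}/∂p_k`. -/
def CU {n M : ℕ} (a : (Fin (M + 3) → Fin n) → ℝ) (i j k : Fin n) (p : Fin n → ℝ) : ℝ :=
  -(1 / 2 : ℝ) * pd (gU a i j) k p

/-- Symmetry of `a` in all of its `m` indices. -/
def aSym {n M : ℕ} (a : (Fin (M + 3) → Fin n) → ℝ) : Prop :=
  ∀ (σ : Equiv.Perm (Fin (M + 3))) (ι : Fin (M + 3) → Fin n), a (ι ∘ σ) = a ι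

/-- `a_i = ∑_s a_{is} a^s`, where `aLow` is the inverse matrix of `(a^{ij})`. -/
def aL {n M : ℕ} (a : (Fin (M + 3) → Fin n) → ℝ) (aLow : Matrix (Fin n) (Fin n) ℝ)
    (p : Fin n → ℝ) (i : Fin n) : ℝ :=
  ∑ s, aLow i s * aU1 a s p

/-- `a_i^{jk} = ∑_s a_{is} a^{sjk}`. -/
def aL3 {n M : ℕ} (a : (Fin (M + 3) → Fin n) → ℝ) (aLow : Matrix (Fin n) (Fin n) ℝ)
    (p : Fin n → ℝ) (i j k : Fin n) : ℝ :=
  ∑ s, aLow i s * aU3 a s j k p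

/-- `g_{ij} = (1/(m-1)) a_{ij} + ((m-2)/(m-1)) a_i a_j`, the inverse of `g^{ij}`. -/
def gL {n M : ℕ} (a : (Fin (M + 3) → Fin n) → ℝ) (aLow : Matrix (Fin n) (Fin n) ℝ)
    (p : Fin n → ℝ) (i j : Fin n) : ℝ :=
  (1 / (M + 2 : ℝ)) * aLow i j + ((M + 1 : ℝ) / (M + 2)) * aL a aLow p i * aL a aLow p j

/-- v-derivation components `C_i^{jk} = ∑_s g_{is} C^{sjk}`. -/
def CL {n M : ℕ} (a : (Fin (M + 3) → Fin n) → ℝ) (aLow : Matrix (Fin n) (Fin n) ℝ)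
    (p : Fin n → ℝ) (i j k : Fin n) : ℝ :=
  ∑ s, gL a aLow p i s * CU a s j k p

/-- v-curvature d-tensor `S^{hijk} = ∑_r (C_r^{ij} C^{rhk} - C_r^{ik} C^{rhj})`. -/
def Scurv {n M : ℕ} (a : (Fin (M + 3) → Fin n) → ℝ) (aLow : Matrix (Fin n) (Fin n) ℝ)
    (p : Fin n → ℝ) (h i j k : Fin n) : ℝ :=
  ∑ r, (CL a aLow p r i j * CU a r h k p - CL a aLow p r i k * CU a r h j p)

/-- `U^{hijk} = ∑_r (a_r^{ij} a^{rhk} - a_r^{ik} a^{rhj})`. -/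
def Ufun {n M : ℕ} (a : (Fin (M + 3) → Fin n) → ℝ) (aLow : Matrix (Fin n) (Fin n) ℝ)
    (p : Fin n → ℝ) (h i j k : Fin n) : ℝ :=
  ∑ r, (aL3 a aLow p r i j * aU3 a r h k p - aL3 a aLow p r i k * aU3 a r h j p)


section Analytic
variable {n M : ℕ} (a : (Fin (M + 3) → Fin n) → ℝ)

def T1v (i : Fin n) (p : Fin n → ℝ) : ℝ := Tsum (fun ι => a (Fin.cons i ι)) p
def T2v (i j : Fin n) (p : Fin n → ℝ) : ℝ :=
  Tsum (fun ι => a (Fin.cons i (Fin.cons j ι))) p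
def T3v (i j k : Fin n) (p : Fin n → ℝ) : ℝ :=
  Tsum (fun ι => a (Fin.cons i (Fin.cons j (Fin.cons k ι)))) p

lemma Afun_eq (p : Fin n → ℝ) : Afun a p = Tsum a p := rfl
lemma aU1_eq (i : Fin n) (p : Fin n → ℝ) :
    aU1 a i p = T1v a i p / Kfun a p ^ (M+2) := rfl
lemma aU2_eq (i j : Fin n) (p : Fin n → ℝ) :
    aU2 a i j p = T2v a i j p / Kfun a p ^ (M+1) := rfl
lemma aU3_eq (i j k : Fin n) (p : Fin n → ℝ) :
    aU3 a i j k p = T3v a i j k p / Kfun a p ^ M := rfl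

variable (hsym : aSym a)
include hsym

lemma sym1 (i : Fin n) : TSym (fun ι => a (Fin.cons i ι)) := TSym.cons hsym i
lemma sym2 (i j : Fin n) : TSym (fun ι => a (Fin.cons i (Fin.cons j ι))) :=
  TSym.cons (sym1 a hsym i) j

lemma T2v_symm (i j : Fin n) (p : Fin n → ℝ) : T2v a i j p = T2v a j i p := by
  unfold T2v Tsum
  exact Finset.sum_congr rfl fun ι _ =>
    congrArg (· * ∏ t, p (ι t)) (TSym.swap01 hsym i j ι)

lemma T3v_symm12 (i j k : Fin n) (p : Fin n → ℝ) : T3v a i j k p = T3v a j i k p := by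
  unfold T3v Tsum
  exact Finset.sum_congr rfl fun ι _ =>
    congrArg (· * ∏ t, p (ι t)) (TSym.swap01 hsym i j (Fin.cons k ι))

lemma T3v_symm23 (i j k : Fin n) (p : Fin n → ℝ) : T3v a i j k p = T3v a i k j p := by
  unfold T3v Tsum
  exact Finset.sum_congr rfl fun ι _ =>
    congrArg (· * ∏ t, p (ι t)) (TSym.swap01 (TSym.cons hsym i) j k ι)

omit hsym

lemma Euler0 (p : Fin n → ℝ) : ∑ j, p j * T1v a j p = Afun a p :=
  (Tsum_succ (L := M+2) a p).symm
lemma Euler1 (i : Fin n) (p : Fin n → ℝ) : ∑ j, p j * T2v a i j p = T1v a i p :=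
  (Tsum_succ (L := M+1) (fun ι => a (Fin.cons i ι)) p).symm
lemma Euler2 (i j : Fin n) (p : Fin n → ℝ) :
    ∑ k, p k * T3v a i j k p = T2v a i j p :=
  (Tsum_succ (L := M) (fun ι => a (Fin.cons i (Fin.cons j ι))) p).symm

lemma contA : Continuous (Afun a) :=
  continuous_finset_sum _ fun ι _ =>
    continuous_const.mul (continuous_finset_prod _ fun t _ => continuous_apply _)

end Analytic

section Deriv
variable {n M : ℕ} {a : (Fin (M + 3) → Fin n) → ℝ}

lemma Kpos {q : Fin n → ℝ} (hq : 0 < Afun a q) : 0 < Kfun a q :=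
  Real.rpow_pos_of_pos hq _

lemma Kpow {q : Fin n → ℝ} (hq : 0 < Afun a q) : Kfun a q ^ (M+3) = Afun a q := by
  rw [Kfun, ← Real.rpow_natCast (Afun a q ^ ((1:ℝ)/(M+3))) (M+3), ← Real.rpow_mul hq.le]
  rw [show (1:ℝ)/(M+3) * ((M+3:ℕ):ℝ) = 1 by push_cast; field_simp]
  exact Real.rpow_one _

lemma ev_pos {q : Fin n → ℝ} (hq : 0 < Afun a q) (k : Fin n) :
    ∀ᶠ t in nhds (q k), 0 < Afun a (Function.update q k t) := by
  have hcont : Continuous fun t => Afun a (Function.update q k t) :=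
    (contA a).comp (continuous_const.update k continuous_id)
  have h1 : Afun a (Function.update q k (q k)) = Afun a q := by
    rw [Function.update_eq_self]
  have := hcont.continuousAt (x := q k) (Ioi_mem_nhds (by rw [h1]; exact hq))
  exact this

variable (hsym : aSym a)
include hsym

lemma hD0 (q : Fin n → ℝ) (k : Fin n) :
    HasDerivAt (fun t => Afun a (Function.update q k t)) (((M:ℝ)+3) * T1v a k q) (q k) := by
  have := hasDerivAt_Tsum (L := M+2) (c := a) hsym q k
  convert this using 2 <;> push_cast <;> first | rfl | ring

lemma hD1 (q : Fin n → ℝ) (i k : Fin n) :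
    HasDerivAt (fun t => T1v a i (Function.update q k t)) (((M:ℝ)+2) * T2v a i k q) (q k) := by
  have := hasDerivAt_Tsum (L := M+1) (sym1 a hsym i) q k
  convert this using 2 <;> push_cast <;> first | rfl | ring

lemma hD2 (q : Fin n → ℝ) (i j k : Fin n) :
    HasDerivAt (fun t => T2v a i j (Function.update q k t)) (((M:ℝ)+1) * T3v a i j k q)
      (q k) := by
  have := hasDerivAt_Tsum (L := M) (sym2 a hsym i j) q k
  convert this using 2 <;> push_cast <;> first | rfl | ring

lemma hDK {q : Fin n → ℝ} (hq : 0 < Afun a q) (k : Fin n) :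
    HasDerivAt (fun t => Kfun a (Function.update q k t))
      (T1v a k q / Kfun a q ^ (M+2)) (q k) := by
  have hup : Afun a (Function.update q k (q k)) = Afun a q := by
    rw [Function.update_eq_self]
  have h := (hD0 hsym q k).rpow_const (p := (1:ℝ)/(M+3)) (Or.inl (by rw [hup]; exact hq.ne'))
  rw [hup] at h
  have hK := Kpos (a := a) hq
  have hKn : Kfun a q ≠ 0 := hK.ne'
  have harith : ((M:ℝ)+3) * T1v a k q * ((1:ℝ)/(M+3)) * Afun a q ^ ((1:ℝ)/(M+3) - 1)
      = T1v a k q / Kfun a q ^ (M+2) := by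
    rw [Real.rpow_sub hq, Real.rpow_one,
      show Afun a q ^ ((1:ℝ)/(M+3)) = Kfun a q from rfl, ← Kpow hq]
    have h3 : ((M:ℝ)+3) ≠ 0 := by positivity
    field_simp
    ring
  rw [harith] at h
  exact h

lemma pdK {q : Fin n → ℝ} (hq : 0 < Afun a q) (k : Fin n) :
    pd (Kfun a) k q = T1v a k q / Kfun a q ^ (M+2) := (hDK hsym hq k).deriv

lemma hDK2 {q : Fin n → ℝ} (hq : 0 < Afun a q) (k : Fin n) :
    HasDerivAt (fun t => Kfun a (Function.update q k t) ^ 2)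
      (2 * T1v a k q / Kfun a q ^ (M+1)) (q k) := by
  have h := (hDK hsym hq k).fun_pow 2
  simp only [Function.update_eq_self] at h
  refine h.congr_deriv ?_
  have hKn : Kfun a q ≠ 0 := (Kpos hq).ne'
  field_simp
  ring

lemma pdK2 {q : Fin n → ℝ} (hq : 0 < Afun a q) (k : Fin n) :
    pd (fun r => Kfun a r ^ 2) k q = 2 * T1v a k q / Kfun a q ^ (M+1) :=
  (hDK2 hsym hq k).deriv

lemma gU_eq {q : Fin n → ℝ} (hq : 0 < Afun a q) (i j : Fin n) :
    gU a i j q = ((M:ℝ)+2) * T2v a i j q / Kfun a q ^ (M+1)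
      - ((M:ℝ)+1) * T1v a i q * T1v a j q / Kfun a q ^ (2*M+4) := by
  have hev : (fun t => pd (fun r => Kfun a r ^ 2) j (Function.update q i t))
      =ᶠ[nhds (q i)] fun t => 2 * T1v a j (Function.update q i t) /
        Kfun a (Function.update q i t) ^ (M+1) := by
    filter_upwards [ev_pos hq i] with t ht
    exact pdK2 hsym ht j
  have hder := HasDerivAt.fun_div ((hD1 hsym q j i).const_mul 2)
    ((hDK hsym hq i).fun_pow (M+1)) (pow_ne_zero _ (by simp only [Function.update_eq_self]; exact (Kpos hq).ne'))
  simp only [Function.update_eq_self] at hder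
  have hKn : Kfun a q ≠ 0 := (Kpos hq).ne'
  rw [gU]
  show (1/2 : ℝ) * deriv (fun t => pd (fun r => Kfun a r ^ 2) j (Function.update q i t))
    (q i) = _
  rw [hev.deriv_eq, hder.deriv, T2v_symm a hsym j i]
  push_cast
  field_simp
  ring

lemma hU_eq {q : Fin n → ℝ} (hq : 0 < Afun a q) (i j : Fin n) :
    hU a i j q = ((M:ℝ)+2) * (aU2 a i j q - aU1 a i q * aU1 a j q) := by
  have hev : (fun t => pd (Kfun a) j (Function.update q i t))
      =ᶠ[nhds (q i)] fun t => T1v a j (Function.update q i t) /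
        Kfun a (Function.update q i t) ^ (M+2) := by
    filter_upwards [ev_pos hq i] with t ht
    exact pdK hsym ht j
  have hder := HasDerivAt.fun_div (hD1 hsym q j i)
    ((hDK hsym hq i).fun_pow (M+2)) (pow_ne_zero _ (by simp only [Function.update_eq_self]; exact (Kpos hq).ne'))
  simp only [Function.update_eq_self] at hder
  have hKn : Kfun a q ≠ 0 := (Kpos hq).ne'
  rw [hU]
  show Kfun a q * deriv (fun t => pd (Kfun a) j (Function.update q i t)) (q i) = _
  rw [hev.deriv_eq, hder.deriv, T2v_symm a hsym j i, aU2_eq, aU1_eq, aU1_eq]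
  push_cast
  field_simp
  ring

lemma CU_eq {q : Fin n → ℝ} (hq : 0 < Afun a q) (i j k : Fin n) :
    CU a i j k q = -(((M:ℝ)+1) * ((M:ℝ)+2) / 2) *
      (aU3 a i j k q - aU2 a i j q * aU1 a k q - aU2 a i k q * aU1 a j q
        - aU2 a j k q * aU1 a i q + 2 * (aU1 a i q * aU1 a j q * aU1 a k q)) /
      Kfun a q := by
  have hev : (fun t => gU a i j (Function.update q k t))
      =ᶠ[nhds (q k)] fun t =>
        ((M:ℝ)+2) * T2v a i j (Function.update q k t) /
          Kfun a (Function.update q k t) ^ (M+1)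
        - ((M:ℝ)+1) * (T1v a i (Function.update q k t) * T1v a j (Function.update q k t)) /
          Kfun a (Function.update q k t) ^ (2*M+4) := by
    filter_upwards [ev_pos hq k] with t ht
    rw [gU_eq hsym ht i j]; ring
  have hd1 := HasDerivAt.fun_div ((hD2 hsym q i j k).const_mul ((M:ℝ)+2))
    ((hDK hsym hq k).fun_pow (M+1)) (pow_ne_zero _ (by simp only [Function.update_eq_self]; exact (Kpos hq).ne'))
  have hd2 := HasDerivAt.fun_div
    (((hD1 hsym q i k).fun_mul (hD1 hsym q j k)).const_mul ((M:ℝ)+1))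
    ((hDK hsym hq k).fun_pow (2*M+4)) (pow_ne_zero _ (by simp only [Function.update_eq_self]; exact (Kpos hq).ne'))
  have hder := hd1.fun_sub hd2
  simp only [Function.update_eq_self] at hder
  have hKn : Kfun a q ≠ 0 := (Kpos hq).ne'
  rw [CU]
  show -(1/2 : ℝ) * deriv (fun t => gU a i j (Function.update q k t)) (q k) = _
  rw [hev.deriv_eq, hder.deriv, aU3_eq, aU2_eq, aU2_eq, aU2_eq, aU1_eq, aU1_eq, aU1_eq]
  push_cast
  field_simp
  ring

lemma pd_aU2 {q : Fin n → ℝ} (hq : 0 < Afun a q) (i j k : Fin n) :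
    pd (aU2 a i j) k q = ((M:ℝ)+1) *
      (aU3 a i j k q - aU2 a i j q * aU1 a k q) / Kfun a q := by
  have hder := HasDerivAt.fun_div (hD2 hsym q i j k)
    ((hDK hsym hq k).fun_pow (M+1)) (pow_ne_zero _ (by simp only [Function.update_eq_self]; exact (Kpos hq).ne'))
  simp only [Function.update_eq_self] at hder
  have hKn : Kfun a q ≠ 0 := (Kpos hq).ne'
  rw [pd]
  have : (fun t => aU2 a i j (Function.update q k t))
      = fun t => T2v a i j (Function.update q k t) /
          Kfun a (Function.update q k t) ^ (M+1) := rfl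
  rw [this, hder.deriv, aU3_eq, aU2_eq, aU1_eq]
  push_cast
  field_simp
  ring

end Deriv

section EulerU
variable {n M : ℕ} {a : (Fin (M + 3) → Fin n) → ℝ}

lemma eU1 {q : Fin n → ℝ} (hq : 0 < Afun a q) :
    ∑ s, aU1 a s q * q s = Kfun a q := by
  have hKn : Kfun a q ≠ 0 := (Kpos hq).ne'
  simp only [aU1_eq, div_mul_eq_mul_div]
  rw [← Finset.sum_div,
    show (∑ s, T1v a s q * q s) = ∑ s, q s * T1v a s q from
      Finset.sum_congr rfl fun s _ => mul_comm _ _,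
    Euler0, ← Kpow hq]
  rw [show Kfun a q ^ (M+3) = Kfun a q ^ (M+2) * Kfun a q by ring]
  field_simp

lemma eU2 {q : Fin n → ℝ} (hq : 0 < Afun a q) (i : Fin n) :
    ∑ s, aU2 a i s q * q s = Kfun a q * aU1 a i q := by
  have hKn : Kfun a q ≠ 0 := (Kpos hq).ne'
  simp only [aU2_eq, aU1_eq, div_mul_eq_mul_div]
  rw [← Finset.sum_div,
    show (∑ s, T2v a i s q * q s) = ∑ s, q s * T2v a i s q from
      Finset.sum_congr rfl fun s _ => mul_comm _ _,
    Euler1]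
  rw [show Kfun a q ^ (M+2) = Kfun a q ^ (M+1) * Kfun a q by ring]
  field_simp

lemma eU3 {q : Fin n → ℝ} (hq : 0 < Afun a q) (i j : Fin n) :
    ∑ s, aU3 a i j s q * q s = Kfun a q * aU2 a i j q := by
  have hKn : Kfun a q ≠ 0 := (Kpos hq).ne'
  simp only [aU3_eq, aU2_eq, div_mul_eq_mul_div]
  rw [← Finset.sum_div,
    show (∑ s, T3v a i j s q * q s) = ∑ s, q s * T3v a i j s q from
      Finset.sum_congr rfl fun s _ => mul_comm _ _,
    Euler2]
  rw [show Kfun a q ^ (M+1) = Kfun a q ^ M * Kfun a q by ring]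
  field_simp

variable (hsym : aSym a)
include hsym

lemma aU2_symm (i j : Fin n) (q : Fin n → ℝ) : aU2 a i j q = aU2 a j i q := by
  rw [aU2_eq, aU2_eq, T2v_symm a hsym]

lemma aU3_symm12 (i j k : Fin n) (q : Fin n → ℝ) : aU3 a i j k q = aU3 a j i k q := by
  rw [aU3_eq, aU3_eq, T3v_symm12 a hsym]

lemma aU3_symm23 (i j k : Fin n) (q : Fin n → ℝ) : aU3 a i j k q = aU3 a i k j q := by
  rw [aU3_eq, aU3_eq, T3v_symm23 a hsym]

end EulerU
/-- the v-covariant derivative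
`a^{ij}|^k = ∂a^{ij}/∂p_k + ∑_r a^{rj} C_r^{ik} + ∑_r a^{ir} C_r^{jk}` satisfies
`a^{ij}|^k = ((m-2)/K)(a^{ik}a^j + a^{jk}a^i - 2a^i a^j a^k)
= ((m-2)/((m-1)K))(h^{ik}a^j + h^{jk}a^i)`, where `m = M + 3`. -/
theorem stmt_12 {n M : ℕ} (hn : 4 ≤ n) (a : (Fin (M + 3) → Fin n) → ℝ)
    (hsym : aSym a) (p : Fin n → ℝ) (hA : 0 < Afun a p)
    (aLow : Matrix (Fin n) (Fin n) ℝ)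
    (hInv₁ : (Matrix.of fun i j => aU2 a i j p) * aLow = 1)
    (hInv₂ : aLow * (Matrix.of fun i j => aU2 a i j p) = 1) :
    ∀ i j k : Fin n,
      pd (aU2 a i j) k p + (∑ r, aU2 a r j p * CL a aLow p r i k) +
          (∑ r, aU2 a i r p * CL a aLow p r j k) =
        ((M + 1 : ℝ) / Kfun a p) *
          (aU2 a i k p * aU1 a j p + aU2 a j k p * aU1 a i p -
            2 * (aU1 a i p * aU1 a j p * aU1 a k p)) ∧
      pd (aU2 a i j) k p + (∑ r, aU2 a r j p * CL a aLow p r i k) +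
          (∑ r, aU2 a i r p * CL a aLow p r j k) =
        ((M + 1 : ℝ) / ((M + 2 : ℝ) * Kfun a p)) *
          (hU a i k p * aU1 a j p + hU a j k p * aU1 a i p) := by
  intro i j k
  have hK : 0 < Kfun a p := Kpos hA
  have hKn : Kfun a p ≠ 0 := hK.ne'
  -- matrix entry identities
  have e1 : ∀ i j : Fin n, (∑ s, aU2 a i s p * aLow s j) = if i = j then 1 else 0 := by
    intro i j
    have h := congrFun (congrFun hInv₁ i) j
    simpa [Matrix.mul_apply, Matrix.one_apply] using h
  have e2 : ∀ i j : Fin n, (∑ s, aLow i s * aU2 a s j p) = if i = j then 1 else 0 := by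
    intro i j
    have h := congrFun (congrFun hInv₂ i) j
    simpa [Matrix.mul_apply, Matrix.one_apply] using h
  -- a_i = p i / K
  have expand : ∀ s : Fin n, aU1 a s p = ∑ t, aU2 a s t p * p t / Kfun a p := by
    intro s
    rw [← Finset.sum_div, eU2 hA s]
    field_simp
  have haL : ∀ i : Fin n, aL a aLow p i = p i / Kfun a p := by
    intro i
    show (∑ s, aLow i s * aU1 a s p) = p i / Kfun a p
    calc (∑ s, aLow i s * aU1 a s p)
        = ∑ s, ∑ t, aLow i s * (aU2 a s t p * p t / Kfun a p) := by
          refine Finset.sum_congr rfl fun s _ => ?_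
          rw [expand s, Finset.mul_sum]
      _ = ∑ t, ∑ s, aLow i s * (aU2 a s t p * p t / Kfun a p) := Finset.sum_comm
      _ = ∑ t, (∑ s, aLow i s * aU2 a s t p) * (p t / Kfun a p) := by
          refine Finset.sum_congr rfl fun t _ => ?_
          rw [Finset.sum_mul]
          exact Finset.sum_congr rfl fun s _ => by ring
      _ = p i / Kfun a p := by
          simp only [e2]
          rw [Finset.sum_eq_single i]
          · simp
          · intro b _ hb
            simp [Ne.symm hb]
          · simp
  have hM2 : ((M:ℝ)+2) ≠ 0 := by positivity
  -- closed form for CL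
  have hCL : ∀ r i k : Fin n, CL a aLow p r i k =
      -(((M:ℝ)+1)/(2*Kfun a p)) *
        (aL3 a aLow p r i k - (if r = i then 1 else 0) * aU1 a k p
          - (if r = k then 1 else 0) * aU1 a i p
          - aU2 a i k p * (p r / Kfun a p)
          + 2 * (p r / Kfun a p * (aU1 a i p * aU1 a k p))) := by
    intro r i k
    have hCU : ∀ s, CU a s i k p = -(((M:ℝ)+1) * ((M:ℝ)+2) / 2) *
        (aU3 a s i k p - aU2 a s i p * aU1 a k p - aU2 a s k p * aU1 a i p
          - aU2 a i k p * aU1 a s p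
          + 2 * (aU1 a s p * aU1 a i p * aU1 a k p)) / Kfun a p :=
      fun s => CU_eq hsym hA s i k
    have S1 : (∑ s, aLow r s * (aU3 a s i k p - aU2 a s i p * aU1 a k p
          - aU2 a s k p * aU1 a i p - aU2 a i k p * aU1 a s p
          + 2 * (aU1 a s p * aU1 a i p * aU1 a k p)))
        = aL3 a aLow p r i k - (if r = i then 1 else 0) * aU1 a k p
          - (if r = k then 1 else 0) * aU1 a i p - aU2 a i k p * (p r / Kfun a p)
          + 2 * (p r / Kfun a p * (aU1 a i p * aU1 a k p)) := by
      have h3 : (∑ s, aLow r s * aU3 a s i k p) = aL3 a aLow p r i k := rfl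
      have hi : (∑ s, aLow r s * aU2 a s i p) = if r = i then 1 else 0 := e2 r i
      have hk : (∑ s, aLow r s * aU2 a s k p) = if r = k then 1 else 0 := e2 r k
      have hal : (∑ s, aLow r s * aU1 a s p) = p r / Kfun a p := haL r
      have key : ∀ s : Fin n, aLow r s * (aU3 a s i k p - aU2 a s i p * aU1 a k p
            - aU2 a s k p * aU1 a i p - aU2 a i k p * aU1 a s p
            + 2 * (aU1 a s p * aU1 a i p * aU1 a k p))
          = aLow r s * aU3 a s i k p
            - aLow r s * aU2 a s i p * aU1 a k p
            - aLow r s * aU2 a s k p * aU1 a i p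
            - aU2 a i k p * (aLow r s * aU1 a s p)
            + 2 * (aU1 a i p * aU1 a k p) * (aLow r s * aU1 a s p) := fun s => by ring
      simp only [key]
      rw [Finset.sum_add_distrib, Finset.sum_sub_distrib, Finset.sum_sub_distrib,
        Finset.sum_sub_distrib, ← Finset.sum_mul, ← Finset.sum_mul, ← Finset.mul_sum,
        ← Finset.mul_sum, h3, hi, hk, hal]
      ring
    have S2 : (∑ s, p s * (aU3 a s i k p - aU2 a s i p * aU1 a k p
          - aU2 a s k p * aU1 a i p - aU2 a i k p * aU1 a s p
          + 2 * (aU1 a s p * aU1 a i p * aU1 a k p))) = 0 := by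
      have t1 : (∑ s, p s * aU3 a s i k p) = Kfun a p * aU2 a i k p := by
        rw [show (∑ s, p s * aU3 a s i k p) = ∑ s, aU3 a i k s p * p s from
          Finset.sum_congr rfl fun s _ => by
            rw [aU3_symm12 hsym s i k, aU3_symm23 hsym i s k]; ring]
        exact eU3 hA i k
      have t2 : (∑ s, p s * aU2 a s i p) = Kfun a p * aU1 a i p := by
        rw [show (∑ s, p s * aU2 a s i p) = ∑ s, aU2 a i s p * p s from
          Finset.sum_congr rfl fun s _ => by rw [aU2_symm hsym s i]; ring]
        exact eU2 hA i
      have t3 : (∑ s, p s * aU2 a s k p) = Kfun a p * aU1 a k p := by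
        rw [show (∑ s, p s * aU2 a s k p) = ∑ s, aU2 a k s p * p s from
          Finset.sum_congr rfl fun s _ => by rw [aU2_symm hsym s k]; ring]
        exact eU2 hA k
      have t4 : (∑ s, p s * aU1 a s p) = Kfun a p := by
        rw [show (∑ s, p s * aU1 a s p) = ∑ s, aU1 a s p * p s from
          Finset.sum_congr rfl fun s _ => by ring]
        exact eU1 hA
      have key : ∀ s : Fin n, p s * (aU3 a s i k p - aU2 a s i p * aU1 a k p
            - aU2 a s k p * aU1 a i p - aU2 a i k p * aU1 a s p
            + 2 * (aU1 a s p * aU1 a i p * aU1 a k p))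
          = p s * aU3 a s i k p
            - p s * aU2 a s i p * aU1 a k p
            - p s * aU2 a s k p * aU1 a i p
            - aU2 a i k p * (p s * aU1 a s p)
            + 2 * (aU1 a i p * aU1 a k p) * (p s * aU1 a s p) := fun s => by ring
      simp only [key]
      rw [Finset.sum_add_distrib, Finset.sum_sub_distrib, Finset.sum_sub_distrib,
        Finset.sum_sub_distrib, ← Finset.sum_mul, ← Finset.sum_mul, ← Finset.mul_sum,
        ← Finset.mul_sum, t1, t2, t3, t4]
      ring
    calc CL a aLow p r i k
        = ∑ s, ((-(((M:ℝ)+1) * ((M:ℝ)+2) / 2) / (((M:ℝ)+2) * Kfun a p)) *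
            (aLow r s * (aU3 a s i k p - aU2 a s i p * aU1 a k p
              - aU2 a s k p * aU1 a i p - aU2 a i k p * aU1 a s p
              + 2 * (aU1 a s p * aU1 a i p * aU1 a k p)))
          + (-(((M:ℝ)+1) * ((M:ℝ)+2) / 2) * (((M:ℝ)+1) /
              (((M:ℝ)+2) * Kfun a p ^ 3)) * p r) *
            (p s * (aU3 a s i k p - aU2 a s i p * aU1 a k p
              - aU2 a s k p * aU1 a i p - aU2 a i k p * aU1 a s p
              + 2 * (aU1 a s p * aU1 a i p * aU1 a k p)))) := by
          refine Finset.sum_congr rfl fun s _ => ?_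
          show gL a aLow p r s * CU a s i k p = _
          rw [gL, hCU s, haL r, haL s]
          field_simp
          ring
      _ = -(((M:ℝ)+1)/(2*Kfun a p)) *
          (aL3 a aLow p r i k - (if r = i then 1 else 0) * aU1 a k p
            - (if r = k then 1 else 0) * aU1 a i p
            - aU2 a i k p * (p r / Kfun a p)
            + 2 * (p r / Kfun a p * (aU1 a i p * aU1 a k p))) := by
          rw [Finset.sum_add_distrib, ← Finset.mul_sum, ← Finset.mul_sum, S1, S2]
          field_simp
          ring
  -- contraction sums
  have w2gen : ∀ (x : Fin n) (f : Fin n → ℝ),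
      (∑ r, f r * (if r = x then 1 else 0)) = f x := by
    intro x f
    rw [Finset.sum_eq_single x]
    · simp
    · intro b _ hb; simp [hb]
    · simp
  have w4gen : ∀ x : Fin n, (∑ r, aU2 a r x p * p r) = Kfun a p * aU1 a x p := by
    intro x
    rw [show (∑ r, aU2 a r x p * p r) = ∑ r, aU2 a x r p * p r from
      Finset.sum_congr rfl fun r _ => by rw [aU2_symm hsym r x]]
    exact eU2 hA x
  have w1A : ∀ i' k' j' : Fin n,
      (∑ r, aU2 a r j' p * aL3 a aLow p r i' k') = aU3 a i' j' k' p := by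
    intro i' k' j'
    calc (∑ r, aU2 a r j' p * aL3 a aLow p r i' k')
        = ∑ r, ∑ s, aU2 a r j' p * (aLow r s * aU3 a s i' k' p) := by
          refine Finset.sum_congr rfl fun r _ => ?_
          rw [show aL3 a aLow p r i' k' = ∑ s, aLow r s * aU3 a s i' k' p from rfl,
            Finset.mul_sum]
      _ = ∑ s, ∑ r, aU2 a r j' p * (aLow r s * aU3 a s i' k' p) := Finset.sum_comm
      _ = ∑ s, (∑ r, aU2 a j' r p * aLow r s) * aU3 a s i' k' p := by
          refine Finset.sum_congr rfl fun s _ => ?_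
          rw [Finset.sum_mul]
          refine Finset.sum_congr rfl fun r _ => ?_
          rw [aU2_symm hsym r j']; ring
      _ = aU3 a i' j' k' p := by
          simp only [e1]
          rw [Finset.sum_eq_single j']
          · rw [if_pos rfl, one_mul, aU3_symm12 hsym]
          · intro b _ hb; simp [Ne.symm hb]
          · simp
  have hsumA : (∑ r, aU2 a r j p * CL a aLow p r i k)
      = -(((M:ℝ)+1)/(2*Kfun a p)) *
        (aU3 a i j k p - aU2 a i j p * aU1 a k p - aU2 a i k p * aU1 a j p
          - aU2 a j k p * aU1 a i p
          + 2 * (aU1 a i p * aU1 a j p * aU1 a k p)) := by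
    simp only [hCL]
    have key : ∀ r : Fin n, aU2 a r j p * (-(((M:ℝ)+1)/(2*Kfun a p)) *
          (aL3 a aLow p r i k - (if r = i then 1 else 0) * aU1 a k p
            - (if r = k then 1 else 0) * aU1 a i p
            - aU2 a i k p * (p r / Kfun a p)
            + 2 * (p r / Kfun a p * (aU1 a i p * aU1 a k p))))
        = -(((M:ℝ)+1)/(2*Kfun a p)) *
          (aU2 a r j p * aL3 a aLow p r i k
            - aU2 a r j p * (if r = i then 1 else 0) * aU1 a k p
            - aU2 a r j p * (if r = k then 1 else 0) * aU1 a i p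
            - aU2 a i k p / Kfun a p * (aU2 a r j p * p r)
            + 2 * (aU1 a i p * aU1 a k p) / Kfun a p * (aU2 a r j p * p r)) :=
      fun r => by ring
    simp only [key]
    rw [← Finset.mul_sum, Finset.sum_add_distrib, Finset.sum_sub_distrib,
      Finset.sum_sub_distrib, Finset.sum_sub_distrib, ← Finset.sum_mul, ← Finset.sum_mul,
      ← Finset.mul_sum, ← Finset.mul_sum, w1A i k j, w2gen i (fun r => aU2 a r j p),
      w2gen k (fun r => aU2 a r j p), w4gen j, aU2_symm hsym k j]
    field_simp
    ring
  have hsumB : (∑ r, aU2 a i r p * CL a aLow p r j k)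
      = -(((M:ℝ)+1)/(2*Kfun a p)) *
        (aU3 a i j k p - aU2 a i j p * aU1 a k p - aU2 a i k p * aU1 a j p
          - aU2 a j k p * aU1 a i p
          + 2 * (aU1 a i p * aU1 a j p * aU1 a k p)) := by
    simp only [hCL]
    have key : ∀ r : Fin n, aU2 a i r p * (-(((M:ℝ)+1)/(2*Kfun a p)) *
          (aL3 a aLow p r j k - (if r = j then 1 else 0) * aU1 a k p
            - (if r = k then 1 else 0) * aU1 a j p
            - aU2 a j k p * (p r / Kfun a p)
            + 2 * (p r / Kfun a p * (aU1 a j p * aU1 a k p))))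
        = -(((M:ℝ)+1)/(2*Kfun a p)) *
          (aU2 a r i p * aL3 a aLow p r j k
            - aU2 a r i p * (if r = j then 1 else 0) * aU1 a k p
            - aU2 a r i p * (if r = k then 1 else 0) * aU1 a j p
            - aU2 a j k p / Kfun a p * (aU2 a r i p * p r)
            + 2 * (aU1 a j p * aU1 a k p) / Kfun a p * (aU2 a r i p * p r)) :=
      fun r => by rw [aU2_symm hsym r i]; ring
    simp only [key]
    rw [← Finset.mul_sum, Finset.sum_add_distrib, Finset.sum_sub_distrib,
      Finset.sum_sub_distrib, Finset.sum_sub_distrib, ← Finset.sum_mul, ← Finset.sum_mul,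
      ← Finset.mul_sum, ← Finset.mul_sum, w1A j k i, aU3_symm12 hsym j i k p, w2gen j (fun r => aU2 a r i p),
      w2gen k (fun r => aU2 a r i p), w4gen i, aU2_symm hsym j i, aU2_symm hsym k i]
    field_simp
  have hpd : pd (aU2 a i j) k p
      = ((M:ℝ)+1) * (aU3 a i j k p - aU2 a i j p * aU1 a k p) / Kfun a p :=
    pd_aU2 hsym hA i j k
  constructor
  · rw [hpd, hsumA, hsumB]
    field_simp
    ring
  · rw [hpd, hsumA, hsumB, hU_eq hsym hA i k, hU_eq hsym hA j k]
    field_simp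
    ring
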